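/- For all integers k ≥ 1 and n ≥ k + 1 with n + k odd, there exists a graph of order n with minimum degree exactly (n + k − 3)/2 that is not k-connected. (Such a graph is obtained from two vertex-disjoint copies of the complete graph K_{(n+k−1)/2} by identifying k − 1 vertices of one copy with k − 1 vertices of the other; this shows that the bound δ(G) ≥ (n + k − 2)/2 guaranteeing k-connectivity is best possible.) -/

import Mathlib

open SimpleGraph

/-- A graph `G` on a finite vertex type is `k`-connected if its vertex connectivity is at
least `k`. -/
def IsKConnected {V : Type*} [Fintype V] (k : ℕ) (G : SimpleGraph V) : Prop :=
  k < Fintype.card V ∧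
    ∀ S : Finset V, S.card < k → (G.induce ((S : Set V)ᶜ)).Connected

/-- The minimum degree of a graph on a finite vertex type. -/
noncomputable def minDeg {V : Type*} [Fintype V] (G : SimpleGraph V) : ℕ :=
  @SimpleGraph.minDegree V G _ (Classical.decRel _)

/-- For all integers `k ≥ 1` and `n ≥ k + 1` with `n + k` odd, there is a graph of order
`n` with minimum degree exactly `(n + k − 3)/2` that is not `k`-connected. -/
theorem statement_14 (k n : ℕ) (hk : 1 ≤ k) (hn : k + 1 ≤ n) (hodd : Odd (n + k)) :
    ∃ G : SimpleGraph (Fin n), minDeg G = (n + k - 3) / 2 ∧ ¬ IsKConnected k G := by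
  obtain ⟨t, ht⟩ := hodd
  set m := (n + k - 1) / 2 with hmdef
  have h2m : 2 * m = n + k - 1 := by omega
  have hmn : m < n := by omega
  have h1m : 1 ≤ n - m := by omega
  have hnm : n - m ≤ m := by omega
  have hnpos : 0 < n := by omega
  let G : SimpleGraph (Fin n) :=
    { Adj := fun x y => x ≠ y ∧ ((x.val < m ∧ y.val < m) ∨ (n - m ≤ x.val ∧ n - m ≤ y.val))
      symm := ⟨fun x y h => ⟨h.1.symm, by tauto⟩⟩
      loopless := ⟨fun x h => h.1 rfl⟩ }
  have hAdj : ∀ x y : Fin n, G.Adj x y ↔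
      x ≠ y ∧ ((x.val < m ∧ y.val < m) ∨ (n - m ≤ x.val ∧ n - m ≤ y.val)) := fun x y => Iff.rfl
  haveI : DecidableRel G.Adj := Classical.decRel _
  haveI : Nonempty (Fin n) := ⟨⟨0, hnpos⟩⟩
  refine ⟨G, ?_, ?_⟩
  · -- minimum degree
    have hlow : ∀ v : Fin n, m - 1 ≤ G.degree v := by
      intro v
      rcases lt_or_ge v.val m with hv | hv
      · have hsub : (Finset.Iio (⟨m, hmn⟩ : Fin n)).erase v ⊆ G.neighborFinset v := by
          intro y hy
          rw [Finset.mem_erase, Finset.mem_Iio] at hy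
          rw [SimpleGraph.mem_neighborFinset, hAdj]
          exact ⟨fun h => hy.1 h.symm, Or.inl ⟨hv, hy.2⟩⟩
        have := Finset.card_le_card hsub
        rw [SimpleGraph.card_neighborFinset_eq_degree] at this
        have hc : (Finset.Iio (⟨m, hmn⟩ : Fin n)).card = m := Fin.card_Iio _
        have := Finset.pred_card_le_card_erase (s := Finset.Iio (⟨m, hmn⟩ : Fin n)) (a := v)
        omega
      · have hv' : n - m ≤ v.val := le_trans hnm hv
        have hsub : (Finset.Ici (⟨n - m, by omega⟩ : Fin n)).erase v ⊆ G.neighborFinset v := by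
          intro y hy
          rw [Finset.mem_erase, Finset.mem_Ici] at hy
          rw [SimpleGraph.mem_neighborFinset, hAdj]
          exact ⟨fun h => hy.1 h.symm, Or.inr ⟨hv', hy.2⟩⟩
        have := Finset.card_le_card hsub
        rw [SimpleGraph.card_neighborFinset_eq_degree] at this
        have hc : (Finset.Ici (⟨n - m, by omega⟩ : Fin n)).card = n - (n - m) := Fin.card_Ici _
        have := Finset.pred_card_le_card_erase (s := Finset.Ici (⟨n - m, by omega⟩ : Fin n)) (a := v)
        omega
    set v0 : Fin n := ⟨0, hnpos⟩ with hv0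
    have hdeg0 : G.degree v0 = m - 1 := by
      have hsub : G.neighborFinset v0 ⊆ (Finset.Iio (⟨m, hmn⟩ : Fin n)).erase v0 := by
        intro y hy
        rw [SimpleGraph.mem_neighborFinset, hAdj] at hy
        rw [Finset.mem_erase, Finset.mem_Iio]
        rcases hy.2 with h | h
        · exact ⟨fun h' => hy.1 h'.symm, h.2⟩
        · exact absurd h.1 (by simp [hv0]; omega)
      have h1 := Finset.card_le_card hsub
      rw [SimpleGraph.card_neighborFinset_eq_degree] at h1
      have hmem : v0 ∈ Finset.Iio (⟨m, hmn⟩ : Fin n) := by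
        rw [Finset.mem_Iio]; exact Fin.mk_lt_mk.mpr (by omega)
      have h2 := Finset.card_erase_of_mem hmem
      have hc : (Finset.Iio (⟨m, hmn⟩ : Fin n)).card = m := Fin.card_Iio _
      have := hlow v0
      omega
    have : G.minDegree = m - 1 := by
      have h1 := SimpleGraph.minDegree_le_degree G v0
      have h2 := SimpleGraph.le_minDegree_of_forall_le_degree G (m - 1) hlow
      omega
    have hmd : minDeg G = m - 1 := by
      unfold minDeg
      convert this using 2
    omega
  · -- not k-connected
    rintro ⟨-, hconn⟩
    set S : Finset (Fin n) := Finset.Ico (⟨n - m, by omega⟩ : Fin n) (⟨m, hmn⟩ : Fin n) with hS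
    have hScard : S.card = k - 1 := by
      rw [hS, Fin.card_Ico]; simp only [Fin.val_mk]; omega
    have hmemS : ∀ x : Fin n, x ∈ S ↔ n - m ≤ x.val ∧ x.val < m := by
      intro x; rw [hS, Finset.mem_Ico]
      constructor
      · rintro ⟨h1, h2⟩; exact ⟨h1, h2⟩
      · rintro ⟨h1, h2⟩; exact ⟨h1, h2⟩
    have hconn' := hconn S (by omega)
    have ha : (⟨0, hnpos⟩ : Fin n) ∈ ((S : Set (Fin n))ᶜ) := by
      simp only [Set.mem_compl_iff, Finset.coe_sort_coe, Finset.mem_coe, hmemS]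
      omega
    have hb : (⟨n - 1, by omega⟩ : Fin n) ∈ ((S : Set (Fin n))ᶜ) := by
      simp only [Set.mem_compl_iff, Finset.coe_sort_coe, Finset.mem_coe, hmemS]
      omega
    obtain ⟨w⟩ := hconn'.preconnected ⟨⟨0, hnpos⟩, ha⟩ ⟨⟨n - 1, by omega⟩, hb⟩
    -- invariant: val < n - m is preserved along walks
    have hinv : ∀ (u v : ↥((S : Set (Fin n))ᶜ)),
        (G.induce ((S : Set (Fin n))ᶜ)).Walk u v → (u : Fin n).val < n - m →
        (v : Fin n).val < n - m := by
      intro u v w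
      induction w with
      | nil => exact id
      | @cons a b c hadj p ih =>
        intro hu
        apply ih
        have hbS : (b : Fin n) ∉ S := fun hmem => b.2 (Finset.mem_coe.mpr hmem)
        rw [hmemS] at hbS
        have hadj' : G.Adj (a : Fin n) (b : Fin n) := hadj
        rw [hAdj] at hadj'
        rcases hadj'.2 with h | h
        · omega
        · omega
    have := hinv _ _ w (by simpa using (by omega : (0 : ℕ) < n - m))
    simp only at this
    omega
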